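/- For the q-deformed truncated geometric weights p_{m,α}(j), the identity p_{g+1,α}(j) − α p_{g,α}(j−1) = (q^j − α q^g) p_{g,α}(j) holds for all integers g ≥ 0 and 1 ≤ j ≤ g. -/

import Mathlib

/-- The finite q-Pochhammer symbol `(z;q)_k = ∏_{i=0}^{k-1} (1 - z q^i)`. -/
noncomputable def qPoch (q z : ℝ) (k : ℕ) : ℝ := ∏ i ∈ Finset.range k, (1 - z * q ^ i)

/-- The q-deformed truncated geometric weight
`p_{m,α}(j) = α^j (α;q)_{m-j} (q;q)_m / ((q;q)_j (q;q)_{m-j})`. -/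
noncomputable def pTrunc (q α : ℝ) (m j : ℕ) : ℝ :=
  α ^ j * qPoch q α (m - j) * qPoch q q m / (qPoch q q j * qPoch q q (m - j))

lemma qPoch_succ (q z : ℝ) (k : ℕ) :
    qPoch q z (k + 1) = qPoch q z k * (1 - z * q ^ k) := Finset.prod_range_succ _ _

lemma one_sub_q_pow_pos (q : ℝ) (hq0 : 0 < q) (hq1 : q < 1) (k : ℕ) :
    0 < 1 - q * q ^ k := by
  have : q * q ^ k < 1 := by
    calc q * q ^ k ≤ q * 1 := by
          exact mul_le_mul_of_nonneg_left (pow_le_one₀ hq0.le hq1.le) hq0.le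
    _ = q := mul_one q
    _ < 1 := hq1
  linarith

lemma qPoch_q_pos (q : ℝ) (hq0 : 0 < q) (hq1 : q < 1) (k : ℕ) :
    0 < qPoch q q k := by
  apply Finset.prod_pos
  intro i _
  exact one_sub_q_pow_pos q hq0 hq1 i

/-- the recurrence
`p_{g+1,α}(j) − α p_{g,α}(j−1) = (q^j − α q^g) p_{g,α}(j)` for `g ≥ 0`, `1 ≤ j ≤ g`. -/
theorem pTrunc_recurrence_two (q α : ℝ) (hq0 : 0 < q) (hq1 : q < 1)
    (g j : ℕ) (hj : 1 ≤ j) (hjg : j ≤ g) :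
    pTrunc q α (g + 1) j - α * pTrunc q α g (j - 1)
      = (q ^ j - α * q ^ g) * pTrunc q α g j := by
  obtain ⟨i, rfl⟩ : ∃ i, j = i + 1 := ⟨j - 1, (Nat.succ_pred_eq_of_pos hj).symm⟩
  obtain ⟨k, rfl⟩ : ∃ k, g = (i + 1) + k := ⟨g - (i + 1), (Nat.add_sub_cancel' hjg).symm⟩
  have h1 : (i + 1 + k + 1) - (i + 1) = k + 1 := by omega
  have h2 : (i + 1 + k) - (i + 1 - 1) = k + 1 := by omega
  have h3 : (i + 1 + k) - (i + 1) = k := by omega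
  have h4 : i + 1 - 1 = i := by omega
  have h5 : (i + 1 + k) - i = k + 1 := by omega
  simp only [pTrunc, h1, h2, h3, h4, h5]
  rw [show i + 1 + k + 1 = (i + 1 + k) + 1 from rfl, qPoch_succ q q (i + 1 + k),
    qPoch_succ q α k, qPoch_succ q q k, qPoch_succ q q i]
  have hB := (qPoch_q_pos q hq0 hq1 (i + 1 + k)).ne'
  have hC := (qPoch_q_pos q hq0 hq1 i).ne'
  have hD := (qPoch_q_pos q hq0 hq1 k).ne'
  have hJ := (qPoch_q_pos q hq0 hq1 (i + 1)).ne'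
  have e1 := (one_sub_q_pow_pos q hq0 hq1 i).ne'
  have e2 := (one_sub_q_pow_pos q hq0 hq1 k).ne'
  have e3 := (one_sub_q_pow_pos q hq0 hq1 (i + 1 + k)).ne'
  rw [qPoch_succ q q i] at hJ
  field_simp
  ring_nf
  field_simp
  ring
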